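/- (Lawler–Sokal Cheeger bound for bounded jump processes.) Let (E,ℰ,π) be a probability space and q(x,dy) a symmetric jump kernel (π(dx)q(x,dy) symmetric) with M := sup_x q(x,E) < ∞. Define the Cheeger constant k = inf over measurable A with π(A) ∈ (0,1) of ∫_A π(dx) q(x,A^c) / min(π(A), π(A^c)), and λ_1 = inf{ D(f) : π(f)=0, ‖f‖_2=1 } where D(f) = (1/2)∫∫ π(dx)q(x,dy)(f(y)−f(x))². Then λ_1 ≥ k²/(2M). -/

import Mathlib

open MeasureTheory ProbabilityTheory

open Set Filter Function
open scoped ENNReal Topology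

section LawlerSokal

variable {E : Type*} [MeasurableSpace E]

lemma LS_vol_Ico (a b : ℝ) (ha : 0 ≤ a) :
    volume (Ico a b ∩ Ioi 0) = ENNReal.ofReal (b - a) := by
  rcases le_or_gt b a with hba | hab
  · rw [Ico_eq_empty (not_lt.mpr hba), empty_inter, measure_empty]
    exact (ENNReal.ofReal_eq_zero.mpr (by linarith)).symm
  · rcases eq_or_lt_of_le ha with h0 | h0
    · have he : Ico a b ∩ Ioi 0 = Ioo 0 b := by
        rw [← h0]
        ext t
        simp only [mem_inter_iff, mem_Ico, mem_Ioi, mem_Ioo]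
        constructor
        · rintro ⟨⟨_, h2⟩, h3⟩; exact ⟨h3, h2⟩
        · rintro ⟨h1, h2⟩; exact ⟨⟨h1.le, h2⟩, h1⟩
      rw [he, Real.volume_Ioo, ← h0, sub_zero]
    · have he : Ico a b ∩ Ioi 0 = Ico a b :=
        inter_eq_left.mpr (fun t ht => lt_of_lt_of_le h0 ht.1)
      rw [he, Real.volume_Ico]

lemma LS_contraction (a b m : ℝ) :
    (max (a-m) 0 - max (b-m) 0)^2 + (max (m-a) 0 - max (m-b) 0)^2 ≤ (a-b)^2 := by
  rcases le_total a m with h1 | h1 <;> rcases le_total b m with h2 | h2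
  · rw [max_eq_right (sub_nonpos.mpr h1), max_eq_right (sub_nonpos.mpr h2),
      max_eq_left (sub_nonneg.mpr h1), max_eq_left (sub_nonneg.mpr h2)]
    nlinarith
  · rw [max_eq_right (sub_nonpos.mpr h1), max_eq_left (sub_nonneg.mpr h2),
      max_eq_left (sub_nonneg.mpr h1), max_eq_right (sub_nonpos.mpr h2)]
    nlinarith [mul_nonneg (sub_nonneg.mpr h1) (sub_nonneg.mpr h2)]
  · rw [max_eq_left (sub_nonneg.mpr h1), max_eq_right (sub_nonpos.mpr h2),
      max_eq_right (sub_nonpos.mpr h1), max_eq_left (sub_nonneg.mpr h2)]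
    nlinarith [mul_nonneg (sub_nonneg.mpr h1) (sub_nonneg.mpr h2)]
  · rw [max_eq_left (sub_nonneg.mpr h1), max_eq_left (sub_nonneg.mpr h2),
      max_eq_right (sub_nonpos.mpr h1), max_eq_right (sub_nonpos.mpr h2)]
    nlinarith

lemma LS_half : (1:ℝ≥0∞) - 2⁻¹ = 2⁻¹ := by
  rw [← ENNReal.inv_two_add_inv_two, ENNReal.add_sub_cancel_right (by simp)]

variable {E : Type*} [MeasurableSpace E]

lemma LS_J_swap (π : Measure E) [IsFiniteMeasure π] (q : Kernel E E) [IsFiniteKernel q]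
    (hsymm : ∀ A B : Set E, MeasurableSet A → MeasurableSet B →
      ∫⁻ x in A, q x B ∂π = ∫⁻ x in B, q x A ∂π) :
    (π ⊗ₘ q).map Prod.swap = π ⊗ₘ q := by
  refine MeasureTheory.ext_of_generate_finite _ generateFrom_prod.symm isPiSystem_prod ?_ ?_
  · rintro s ⟨A, hA, B, hB, rfl⟩
    rw [Measure.map_apply measurable_swap (hA.prod hB)]
    have : Prod.swap ⁻¹' (A ×ˢ B) = B ×ˢ A := Set.preimage_swap_prod A B
    rw [this, Measure.compProd_apply_prod hB hA, Measure.compProd_apply_prod hA hB,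
      hsymm B A hB hA]
  · rw [Measure.map_apply measurable_swap MeasurableSet.univ]
    simp

lemma LS_lintegral_swap (π : Measure E) [IsFiniteMeasure π] (q : Kernel E E) [IsFiniteKernel q]
    (hsymm : ∀ A B : Set E, MeasurableSet A → MeasurableSet B →
      ∫⁻ x in A, q x B ∂π = ∫⁻ x in B, q x A ∂π)
    (F : E × E → ℝ≥0∞) (hF : Measurable F) :
    ∫⁻ z, F (Prod.swap z) ∂(π ⊗ₘ q) = ∫⁻ z, F z ∂(π ⊗ₘ q) := by
  conv_rhs => rw [← LS_J_swap π q hsymm]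
  rw [lintegral_map hF measurable_swap]

lemma LS_exists_median (π : Measure E) [IsProbabilityMeasure π] (f : E → ℝ) (hf : Measurable f) :
    ∃ m : ℝ, (2:ℝ≥0∞)⁻¹ ≤ π {x | f x ≤ m} ∧ (2:ℝ≥0∞)⁻¹ ≤ π {x | m ≤ f x} := by
  set s : Set ℝ := {t : ℝ | (2:ℝ≥0∞)⁻¹ ≤ π {x | f x ≤ t}} with hs
  have hmono : ∀ {t t' : ℝ}, t ≤ t' → π {x | f x ≤ t} ≤ π {x | f x ≤ t'} := by
    intro t t' h
    exact measure_mono (fun x hx => le_trans hx h)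
  have hne : s.Nonempty := by
    have hu : (⋃ n : ℕ, {x | f x ≤ (n:ℝ)}) = univ := by
      ext x; simp only [mem_iUnion, mem_univ, iff_true, mem_setOf_eq]
      obtain ⟨n, hn⟩ := exists_nat_ge (f x); exact ⟨n, hn⟩
    have ht : Tendsto (fun n : ℕ => π {x | f x ≤ (n:ℝ)}) atTop
        (𝓝 (π (⋃ n : ℕ, {x | f x ≤ (n:ℝ)}))) := by
      apply tendsto_measure_iUnion_atTop
      intro a b hab x hx
      simp only [mem_setOf_eq] at *
      exact le_trans hx (by exact_mod_cast hab)
    rw [hu, measure_univ] at ht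
    have h2 : (2:ℝ≥0∞)⁻¹ < 1 := by simp [ENNReal.inv_lt_one]
    obtain ⟨n, hn⟩ := (ht.eventually (lt_mem_nhds h2)).exists
    exact ⟨n, hn.le⟩
  have hbdd : BddBelow s := by
    have hi : (⋂ n : ℕ, {x | f x ≤ -(n:ℝ)}) = ∅ := by
      ext x; simp only [mem_iInter, mem_empty_iff_false, iff_false, not_forall, mem_setOf_eq]
      obtain ⟨n, hn⟩ := exists_nat_gt (-(f x))
      exact ⟨n, by push_neg; linarith⟩
    have ht : Tendsto (fun n : ℕ => π {x | f x ≤ -(n:ℝ)}) atTop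
        (𝓝 (π (⋂ n : ℕ, {x | f x ≤ -(n:ℝ)}))) := by
      apply tendsto_measure_iInter_atTop
      · exact fun n => (measurableSet_le hf measurable_const).nullMeasurableSet
      · intro a b hab x hx
        simp only [mem_setOf_eq] at *
        refine le_trans hx (neg_le_neg ?_)
        exact_mod_cast hab
      · exact ⟨0, measure_ne_top _ _⟩
    rw [hi, measure_empty] at ht
    have h2 : (0:ℝ≥0∞) < 2⁻¹ := by simp
    obtain ⟨n, hn⟩ := (ht.eventually (gt_mem_nhds h2)).exists
    refine ⟨-(n:ℝ), fun t hts => ?_⟩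
    by_contra hlt
    push_neg at hlt
    exact absurd (le_trans hts (hmono hlt.le)) (not_le.mpr hn)
  set m := sInf s with hm
  refine ⟨m, ?_, ?_⟩
  · have key : ∀ n : ℕ, (2:ℝ≥0∞)⁻¹ ≤ π {x | f x ≤ m + 1/(n+1)} := by
      intro n
      have hpos : (0:ℝ) < 1/(n+1) := by positivity
      have : sInf s < m + 1/(n+1) := by linarith [hm ▸ (lt_add_of_pos_right m hpos)]
      obtain ⟨t, hts, htlt⟩ := exists_lt_of_csInf_lt hne this
      exact le_trans hts (hmono htlt.le)
    have hint : {x | f x ≤ m} = ⋂ n : ℕ, {x | f x ≤ m + 1/(n+1)} := by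
      ext x
      simp only [mem_iInter, mem_setOf_eq]
      constructor
      · intro h n
        have hp : (0:ℝ) < 1/(n+1) := by positivity
        linarith
      · intro h
        by_contra hlt
        push_neg at hlt
        obtain ⟨n, hn⟩ := exists_nat_one_div_lt (show (0:ℝ) < f x - m by linarith)
        linarith [h n]
    have ht : Tendsto (fun n : ℕ => π {x | f x ≤ m + 1/(n+1)}) atTop
        (𝓝 (π (⋂ n : ℕ, {x | f x ≤ m + 1/(n+1)}))) := by
      apply tendsto_measure_iInter_atTop
      · exact fun n => (measurableSet_le hf measurable_const).nullMeasurableSet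
      · intro a b hab x hx
        simp only [mem_setOf_eq] at *
        have : (1:ℝ)/(b+1) ≤ 1/(a+1) := by
          apply one_div_le_one_div_of_le (by positivity)
          exact_mod_cast by omega
        linarith
      · exact ⟨0, measure_ne_top _ _⟩
    rw [← hint] at ht
    exact ge_of_tendsto ht (Filter.Eventually.of_forall key)
  · have hlow : ∀ n : ℕ, π {x | f x ≤ m - 1/(n+1)} ≤ 2⁻¹ := by
      intro n
      have hpos : (0:ℝ) < 1/(n+1) := by positivity
      have hnotin : (m - 1/(n+1)) ∉ s := fun hin =>
        absurd (csInf_le hbdd hin) (not_le.mpr (by linarith))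
      rw [hs, mem_setOf_eq, not_le] at hnotin
      exact hnotin.le
    have huni : {x | f x < m} = ⋃ n : ℕ, {x | f x ≤ m - 1/(n+1)} := by
      ext x
      simp only [mem_iUnion, mem_setOf_eq]
      constructor
      · intro h
        obtain ⟨n, hn⟩ := exists_nat_one_div_lt (show (0:ℝ) < m - f x by linarith)
        exact ⟨n, by linarith⟩
      · rintro ⟨n, hn⟩
        have : (0:ℝ) < 1/(n+1) := by positivity
        linarith
    have ht : Tendsto (fun n : ℕ => π {x | f x ≤ m - 1/(n+1)}) atTop
        (𝓝 (π (⋃ n : ℕ, {x | f x ≤ m - 1/(n+1)}))) := by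
      apply tendsto_measure_iUnion_atTop
      intro a b hab x hx
      simp only [mem_setOf_eq] at *
      have : (1:ℝ)/(b+1) ≤ 1/(a+1) := by
        apply one_div_le_one_div_of_le (by positivity)
        exact_mod_cast by omega
      linarith
    rw [← huni] at ht
    have hlt : π {x | f x < m} ≤ 2⁻¹ := le_of_tendsto ht (Filter.Eventually.of_forall hlow)
    have hcompl : {x | m ≤ f x} = {x | f x < m}ᶜ := by ext x; simp [not_lt]
    rw [hcompl, measure_compl (measurableSet_lt hf measurable_const) (measure_ne_top _ _),
      measure_univ]
    calc (2:ℝ≥0∞)⁻¹ = 1 - 2⁻¹ := by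
          rw [← ENNReal.inv_two_add_inv_two, ENNReal.add_sub_cancel_right (by simp)]
      _ ≤ 1 - π {x | f x < m} := tsub_le_tsub_left hlt 1

lemma LS_key (π : Measure E) [IsProbabilityMeasure π] (q : Kernel E E) [IsFiniteKernel q]
    (M : ℝ) (hM : 0 < M) (hbound : ∀ x, q x Set.univ ≤ ENNReal.ofReal M)
    (hsymm : ∀ A B : Set E, MeasurableSet A → MeasurableSet B →
      ∫⁻ x in A, q x B ∂π = ∫⁻ x in B, q x A ∂π)
    (k : ℝ)
    (hK : ∀ A : Set E, MeasurableSet A → 0 < π A → π A ≤ 2⁻¹ →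
      ENNReal.ofReal k * π A ≤ ∫⁻ x in A, q x Aᶜ ∂π)
    (p : E → ℝ) (hp : Measurable p) (hp0 : ∀ x, 0 ≤ p x)
    (hsupp : π {x | 0 < p x} ≤ 2⁻¹)
    (P : ℝ≥0∞) (hP : P = ∫⁻ x, ENNReal.ofReal ((p x)^2) ∂π)
    (hP0 : P ≠ 0) (hPfin : P ≠ ∞) :
    (ENNReal.ofReal k)^2 * P ≤ ENNReal.ofReal M *
      ∫⁻ z, ENNReal.ofReal ((p z.1 - p z.2)^2) ∂(π ⊗ₘ q) := by
  set J := π ⊗ₘ q with hJ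
  set k' := ENNReal.ofReal k with hk'
  set M' := ENNReal.ofReal M with hM'
  set A : ℝ → Set E := fun t => {x | t < (p x)^2} with hA
  have hpsq : Measurable (fun x => (p x)^2) := hp.pow_const 2
  have hAmeas : ∀ t, MeasurableSet (A t) := fun t =>
    measurableSet_lt measurable_const hpsq
  -- Step 1 : layer cake
  have step1 : P = ∫⁻ t in Ioi (0:ℝ), π (A t) := by
    rw [hP]
    exact lintegral_eq_lintegral_meas_lt π
      (Filter.Eventually.of_forall (fun x => sq_nonneg (p x))) hpsq.aemeasurable
  -- Step 2 : Cheeger bound on each level set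
  have step2 : ∀ t ∈ Ioi (0:ℝ), k' * π (A t) ≤ ∫⁻ x in A t, q x ((A t)ᶜ) ∂π := by
    intro t ht
    rcases eq_or_ne (π (A t)) 0 with h0 | h0
    · rw [h0, mul_zero]; exact zero_le
    · refine hK (A t) (hAmeas t) (h0.bot_lt) ?_
      refine le_trans (measure_mono ?_) hsupp
      intro x hx
      have hx' : t < (p x)^2 := hx
      have ht' : (0:ℝ) < t := ht
      simp only [mem_setOf_eq]
      by_contra hle
      push_neg at hle
      have hz : p x = 0 := le_antisymm hle (hp0 x)
      rw [hz] at hx'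
      norm_num at hx'
      linarith
  -- the two-variable indicator
  set S : ℝ → E × E → ℝ≥0∞ := fun t z =>
    if (p z.2)^2 ≤ t ∧ t < (p z.1)^2 then 1 else 0 with hSdef
  have hSmeas : Measurable (Function.uncurry S) := by
    have : Function.uncurry S = Set.indicator
        {w : ℝ × (E × E) | (p w.2.2)^2 ≤ w.1 ∧ w.1 < (p w.2.1)^2} 1 := by
      ext w
      simp only [Function.uncurry, hSdef, indicator_apply, mem_setOf_eq, Pi.one_apply]
    rw [this]
    refine (measurable_const.indicator ?_)
    refine MeasurableSet.inter ?_ ?_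
    · exact measurableSet_le ((hpsq.comp measurable_snd).comp measurable_snd) measurable_fst
    · exact measurableSet_lt measurable_fst ((hpsq.comp measurable_fst).comp measurable_snd)
  -- Q t as integral over J
  have hQ : ∀ t, ∫⁻ x in A t, q x ((A t)ᶜ) ∂π = ∫⁻ z, S t z ∂J := by
    intro t
    have hf : Measurable (fun z : E × E => S t z) := hSmeas.comp measurable_prodMk_left
    rw [hJ, Measure.lintegral_compProd hf]
    have hinner : ∀ x, ∫⁻ y, S t (x, y) ∂(q x)
        = (A t).indicator (fun x => q x ((A t)ᶜ)) x := by
      intro x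
      by_cases hx : t < (p x)^2
      · rw [Set.indicator_of_mem (show x ∈ A t from hx)]
        have : (fun y => S t (x, y)) = ((A t)ᶜ).indicator (fun _ => 1) := by
          funext y
          simp only [hSdef, indicator_apply, mem_compl_iff, hA, mem_setOf_eq, not_lt]
          by_cases hy : (p y)^2 ≤ t
          · simp [hy, hx]
          · simp [hy]
        rw [this]
        simp [lintegral_indicator ((hAmeas t).compl)]
      · rw [Set.indicator_of_notMem (show x ∉ A t from hx)]
        have : (fun y => S t (x, y)) = fun _ => 0 := by
          funext y
          simp only [hSdef]
          rw [if_neg]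
          tauto
        rw [this, lintegral_zero]
    rw [← lintegral_indicator (hAmeas t)]
    exact (lintegral_congr hinner).symm
  -- Step 3+4 : integrate over t and swap
  set W : E × E → ℝ≥0∞ := fun z => ENNReal.ofReal ((p z.1)^2 - (p z.2)^2) with hW
  have hWmeas : Measurable W :=
    ENNReal.measurable_ofReal.comp ((hpsq.comp measurable_fst).sub (hpsq.comp measurable_snd))
  have step4 : k' * P ≤ ∫⁻ z, W z ∂J := by
    have hm1 : k' * P = ∫⁻ t in Ioi (0:ℝ), k' * π (A t) := by
      rw [step1, ← lintegral_const_mul' _ _ ENNReal.ofReal_ne_top]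
    have hm2 : (∫⁻ t in Ioi (0:ℝ), k' * π (A t))
        ≤ ∫⁻ t in Ioi (0:ℝ), ∫⁻ z, S t z ∂J := by
      rw [← lintegral_indicator measurableSet_Ioi, ← lintegral_indicator measurableSet_Ioi]
      refine lintegral_mono (fun t => ?_)
      by_cases ht : t ∈ Ioi (0:ℝ)
      · rw [indicator_of_mem ht, indicator_of_mem ht, ← hQ t]
        exact step2 t ht
      · rw [indicator_of_notMem ht, indicator_of_notMem ht]
    have hswap : ∫⁻ t in Ioi (0:ℝ), ∫⁻ z, S t z ∂J = ∫⁻ z, (∫⁻ t in Ioi (0:ℝ), S t z) ∂J := by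
      exact lintegral_lintegral_swap hSmeas.aemeasurable
    have hfiber : ∀ z : E × E, ∫⁻ t in Ioi (0:ℝ), S t z = W z := by
      intro z
      have : (fun t => S t z) = (Ico ((p z.2)^2) ((p z.1)^2)).indicator (fun _ => 1) := by
        funext t
        simp only [hSdef, indicator_apply, mem_Ico]
      rw [this, lintegral_indicator measurableSet_Ico, setLIntegral_one,
        Measure.restrict_apply measurableSet_Ico, LS_vol_Ico _ _ (sq_nonneg _)]
    calc k' * P = ∫⁻ t in Ioi (0:ℝ), k' * π (A t) := hm1
      _ ≤ ∫⁻ t in Ioi (0:ℝ), ∫⁻ z, S t z ∂J := hm2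
      _ = ∫⁻ z, (∫⁻ t in Ioi (0:ℝ), S t z) ∂J := hswap
      _ = ∫⁻ z, W z ∂J := lintegral_congr hfiber
  -- Cauchy-Schwarz part
  set L1 := ∫⁻ z, ENNReal.ofReal ((p z.1 - p z.2)^2) ∂J with hL1
  set L2 := ∫⁻ z, ENNReal.ofReal ((p z.1 + p z.2)^2) ∂J with hL2
  have hWswap : ∫⁻ z, W (Prod.swap z) ∂J = ∫⁻ z, W z ∂J :=
    LS_lintegral_swap π q hsymm W hWmeas
  have habs : ∀ z : E × E, W (Prod.swap z) + W z
      = ENNReal.ofReal |(p z.1)^2 - (p z.2)^2| := by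
    intro z
    show ENNReal.ofReal ((p z.2)^2 - (p z.1)^2) + ENNReal.ofReal ((p z.1)^2 - (p z.2)^2)
      = ENNReal.ofReal |(p z.1)^2 - (p z.2)^2|
    rcases le_total ((p z.2)^2) ((p z.1)^2) with h | h
    · rw [abs_of_nonneg (by linarith), ENNReal.ofReal_of_nonpos (by linarith), zero_add]
    · rw [abs_of_nonpos (by linarith), ENNReal.ofReal_of_nonpos (sub_nonpos.mpr h), add_zero,
        neg_sub]
  have h2W : 2 * ∫⁻ z, W z ∂J = ∫⁻ z, ENNReal.ofReal |(p z.1)^2 - (p z.2)^2| ∂J := by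
    rw [two_mul]
    nth_rewrite 1 [← hWswap]
    have hWs : Measurable fun z : E × E => W (Prod.swap z) := hWmeas.comp measurable_swap
    rw [← lintegral_add_left hWs]
    exact lintegral_congr habs
  have hppos : ∀ z : E × E, 0 ≤ p z.1 + p z.2 := fun z => add_nonneg (hp0 _) (hp0 _)
  have humeas : Measurable fun z : E × E => ENNReal.ofReal |p z.1 - p z.2| :=
    ENNReal.measurable_ofReal.comp
      (((hp.comp measurable_fst).sub (hp.comp measurable_snd)).abs)
  have hvmeas : Measurable fun z : E × E => ENNReal.ofReal (p z.1 + p z.2) :=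
    ENNReal.measurable_ofReal.comp ((hp.comp measurable_fst).add (hp.comp measurable_snd))
  have hconj : (2:ℝ).HolderConjugate 2 := Real.HolderConjugate.two_two
  have hCS : ∫⁻ z, ENNReal.ofReal |(p z.1)^2 - (p z.2)^2| ∂J
      ≤ L1 ^ (1/2:ℝ) * L2 ^ (1/2:ℝ) := by
    have key := ENNReal.lintegral_mul_le_Lp_mul_Lq J hconj humeas.aemeasurable hvmeas.aemeasurable
    have hpt : ∀ z : E × E, ENNReal.ofReal |(p z.1)^2 - (p z.2)^2|
        = ((fun z : E × E => ENNReal.ofReal |p z.1 - p z.2|)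
          * (fun z : E × E => ENNReal.ofReal (p z.1 + p z.2))) z := by
      intro z
      simp only [Pi.mul_apply]
      rw [← ENNReal.ofReal_mul (abs_nonneg _)]
      congr 1
      have he : (p z.1)^2 - (p z.2)^2 = (p z.1 - p z.2) * (p z.1 + p z.2) := by ring
      rw [he, abs_mul, abs_of_nonneg (hppos z)]
    have hu2 : ∫⁻ z, (ENNReal.ofReal |p z.1 - p z.2|) ^ (2:ℝ) ∂J = L1 := by
      refine lintegral_congr fun z => ?_
      rw [ENNReal.ofReal_rpow_of_nonneg (abs_nonneg _) (by norm_num)]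
      congr 1
      rw [show ((2:ℝ)) = ((2:ℕ):ℝ) by norm_num, Real.rpow_natCast, sq_abs]
    have hv2 : ∫⁻ z, (ENNReal.ofReal (p z.1 + p z.2)) ^ (2:ℝ) ∂J = L2 := by
      refine lintegral_congr fun z => ?_
      rw [ENNReal.ofReal_rpow_of_nonneg (hppos z) (by norm_num)]
      congr 1
      rw [show ((2:ℝ)) = ((2:ℕ):ℝ) by norm_num, Real.rpow_natCast]
    calc ∫⁻ z, ENNReal.ofReal |(p z.1)^2 - (p z.2)^2| ∂J
        = ∫⁻ z, ((fun z : E × E => ENNReal.ofReal |p z.1 - p z.2|)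
          * (fun z : E × E => ENNReal.ofReal (p z.1 + p z.2))) z ∂J := lintegral_congr hpt
      _ ≤ (∫⁻ z, (ENNReal.ofReal |p z.1 - p z.2|) ^ (2:ℝ) ∂J) ^ (1/2:ℝ)
          * (∫⁻ z, (ENNReal.ofReal (p z.1 + p z.2)) ^ (2:ℝ) ∂J) ^ (1/2:ℝ) := key
      _ = L1 ^ (1/2:ℝ) * L2 ^ (1/2:ℝ) := by rw [hu2, hv2]
  -- bound L2
  have hmargmeas : Measurable fun z : E × E => ENNReal.ofReal ((p z.1)^2) :=
    ENNReal.measurable_ofReal.comp (hpsq.comp measurable_fst)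
  have hmarg1 : ∫⁻ z, ENNReal.ofReal ((p z.1)^2) ∂J ≤ M' * P := by
    rw [hJ, Measure.lintegral_compProd hmargmeas]
    calc ∫⁻ x, ∫⁻ _, ENNReal.ofReal ((p x)^2) ∂(q x) ∂π
        = ∫⁻ x, ENNReal.ofReal ((p x)^2) * q x univ ∂π := by
          refine lintegral_congr fun x => ?_
          rw [lintegral_const]
      _ ≤ ∫⁻ x, ENNReal.ofReal ((p x)^2) * M' ∂π :=
          lintegral_mono fun x => mul_le_mul_right (hbound x) _
      _ = M' * P := by
          rw [hP, lintegral_mul_const' _ _ ENNReal.ofReal_ne_top, mul_comm]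
  have hmarg2 : ∫⁻ z, ENNReal.ofReal ((p z.2)^2) ∂J = ∫⁻ z, ENNReal.ofReal ((p z.1)^2) ∂J :=
    LS_lintegral_swap π q hsymm (fun z => ENNReal.ofReal ((p z.1)^2)) hmargmeas
  have hL2bound : L2 ≤ 4 * (M' * P) := by
    have hpt2 : ∀ z : E × E, ENNReal.ofReal ((p z.1 + p z.2)^2)
        ≤ 2 * ENNReal.ofReal ((p z.1)^2) + 2 * ENNReal.ofReal ((p z.2)^2) := by
      intro z
      have h2e : (2:ℝ≥0∞) = ENNReal.ofReal (2:ℝ) := by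
        rw [ENNReal.ofReal_ofNat]
      rw [h2e, ← ENNReal.ofReal_mul (by norm_num), ← ENNReal.ofReal_mul (by norm_num),
        ← ENNReal.ofReal_add (by positivity) (by positivity)]
      exact ENNReal.ofReal_le_ofReal (by nlinarith [sq_nonneg (p z.1 - p z.2)])
    calc L2 ≤ ∫⁻ z, (2 * ENNReal.ofReal ((p z.1)^2) + 2 * ENNReal.ofReal ((p z.2)^2)) ∂J :=
          lintegral_mono hpt2
      _ = 2 * ∫⁻ z, ENNReal.ofReal ((p z.1)^2) ∂J
          + 2 * ∫⁻ z, ENNReal.ofReal ((p z.2)^2) ∂J := by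
          rw [lintegral_add_left (hmargmeas.const_mul 2),
            lintegral_const_mul' 2 _ (by norm_num), lintegral_const_mul' 2 _ (by norm_num)]
      _ ≤ 2 * (M' * P) + 2 * (M' * P) := by
          rw [hmarg2]
          exact add_le_add (mul_le_mul_right hmarg1 2) (mul_le_mul_right hmarg1 2)
      _ = 4 * (M' * P) := by ring
  -- combine
  have hfinal : 2 * (k' * P) ≤ L1 ^ (1/2:ℝ) * (4 * (M' * P)) ^ (1/2:ℝ) := by
    calc 2 * (k' * P) ≤ 2 * ∫⁻ z, W z ∂J := mul_le_mul_right step4 2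
      _ = ∫⁻ z, ENNReal.ofReal |(p z.1)^2 - (p z.2)^2| ∂J := h2W
      _ ≤ L1 ^ (1/2:ℝ) * L2 ^ (1/2:ℝ) := hCS
      _ ≤ L1 ^ (1/2:ℝ) * (4 * (M' * P)) ^ (1/2:ℝ) :=
          mul_le_mul_right (ENNReal.rpow_le_rpow hL2bound (by norm_num)) _
  have hsqrt : ∀ x : ℝ≥0∞, (x ^ (1/2:ℝ))^(2:ℕ) = x := fun x => by
    rw [← ENNReal.rpow_natCast, ← ENNReal.rpow_mul]
    norm_num
  have h2 : 2^2 * (k'^2 * P^2) ≤ L1 * (4 * (M' * P)) := by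
    calc 2^2 * (k'^2 * P^2) = (2*(k'*P))^2 := by ring
      _ ≤ (L1 ^ (1/2:ℝ) * (4 * (M' * P)) ^ (1/2:ℝ))^2 := pow_le_pow_left₀ (zero_le) hfinal 2
      _ = (L1 ^ (1/2:ℝ))^2 * ((4 * (M' * P)) ^ (1/2:ℝ))^2 := mul_pow _ _ 2
      _ = L1 * (4 * (M' * P)) := by rw [hsqrt, hsqrt]
  have hcancel : (k'^2 * P) * (4 * P) ≤ (M' * L1) * (4 * P) := by
    calc (k'^2 * P) * (4 * P) = 2^2 * (k'^2 * P^2) := by ring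
      _ ≤ L1 * (4 * (M' * P)) := h2
      _ = (M' * L1) * (4 * P) := by ring
  have h4P0 : (4:ℝ≥0∞) * P ≠ 0 := by
    simp [hP0]
  have h4Pfin : (4:ℝ≥0∞) * P ≠ ∞ := by
    exact ENNReal.mul_ne_top (by norm_num) hPfin
  exact (ENNReal.mul_le_mul_iff_left h4P0 h4Pfin).mp hcancel

lemma LS_repr (π : Measure E) [IsProbabilityMeasure π] (q : Kernel E E) [IsFiniteKernel q]
    (f : E → ℝ) (hf : Measurable f)
    (hfin : ∀ᵐ x ∂π, (∫⁻ y, ENNReal.ofReal ((f y - f x)^2) ∂(q x)) ≠ ∞) :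
    ∫ x, (∫ y, (f y - f x)^2 ∂(q x)) ∂π
      = (∫⁻ x, ∫⁻ y, ENNReal.ofReal ((f y - f x)^2) ∂(q x) ∂π).toReal := by
  have hu : Measurable (uncurry fun x y => ENNReal.ofReal ((f y - f x)^2)) := by
    apply ENNReal.measurable_ofReal.comp
    exact ((hf.comp measurable_snd).sub (hf.comp measurable_fst)).pow_const 2
  have hG : Measurable fun x => ∫⁻ y, ENNReal.ofReal ((f y - f x)^2) ∂(q x) :=
    hu.lintegral_kernel_prod_right
  have hinner : ∀ x, ∫ y, (f y - f x)^2 ∂(q x)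
      = (∫⁻ y, ENNReal.ofReal ((f y - f x)^2) ∂(q x)).toReal := fun x =>
    integral_eq_lintegral_of_nonneg_ae (Filter.Eventually.of_forall fun y => sq_nonneg _)
      ((hf.sub_const (f x)).pow_const 2).aestronglyMeasurable
  calc ∫ x, (∫ y, (f y - f x)^2 ∂(q x)) ∂π
      = ∫ x, (∫⁻ y, ENNReal.ofReal ((f y - f x)^2) ∂(q x)).toReal ∂π := by
        exact integral_congr_ae (Filter.Eventually.of_forall hinner)
    _ = (∫⁻ x, ENNReal.ofReal ((∫⁻ y, ENNReal.ofReal ((f y - f x)^2) ∂(q x)).toReal) ∂π).toReal :=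
        integral_eq_lintegral_of_nonneg_ae
          (Filter.Eventually.of_forall fun x => ENNReal.toReal_nonneg)
          (ENNReal.measurable_toReal.comp hG).aestronglyMeasurable
    _ = (∫⁻ x, ∫⁻ y, ENNReal.ofReal ((f y - f x)^2) ∂(q x) ∂π).toReal := by
        congr 1
        refine lintegral_congr_ae ?_
        filter_upwards [hfin] with x hx
        rw [ENNReal.ofReal_toReal hx]

lemma LS_core (π : Measure E) [IsProbabilityMeasure π] (q : Kernel E E) [IsFiniteKernel q]
    (M : ℝ) (hM : 0 < M) (hbound : ∀ x, q x Set.univ ≤ ENNReal.ofReal M)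
    (hsymm : ∀ A B : Set E, MeasurableSet A → MeasurableSet B →
      ∫⁻ x in A, q x B ∂π = ∫⁻ x in B, q x A ∂π)
    (k : ℝ) (hk0 : 0 ≤ k)
    (hK : ∀ A : Set E, MeasurableSet A → 0 < π A → π A ≤ 2⁻¹ →
      ENNReal.ofReal k * π A ≤ ∫⁻ x in A, q x Aᶜ ∂π)
    (f : E → ℝ) (hf : Measurable f) (hf0 : ∫ x, f x ∂π = 0) (hf1 : ∫ x, (f x)^2 ∂π = 1) :
    k^2/(2*M) ≤ (1/2) * ∫ x, (∫ y, (f y - f x)^2 ∂(q x)) ∂π := by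
  set J := π ⊗ₘ q with hJ
  set M' := ENNReal.ofReal M with hM'
  set k' := ENNReal.ofReal k with hk'
  -- integrability
  have hint2 : Integrable (fun x => (f x)^2) π := by
    by_contra hcon
    rw [integral_undef hcon] at hf1
    norm_num at hf1
  have hintf : Integrable f π := by
    have hb : Integrable (fun x => 1 + (f x)^2) π := (integrable_const (1:ℝ)).add hint2
    refine Integrable.mono' hb hf.aestronglyMeasurable
      (Filter.Eventually.of_forall fun x => ?_)
    rw [Real.norm_eq_abs]
    nlinarith [sq_nonneg (|f x| - 1), sq_abs (f x), abs_nonneg (f x)]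
  have hIf : ∫⁻ x, ENNReal.ofReal ((f x)^2) ∂π = 1 := by
    have h1 : ∫ x, (f x)^2 ∂π = (∫⁻ x, ENNReal.ofReal ((f x)^2) ∂π).toReal :=
      integral_eq_lintegral_of_nonneg_ae
      (Filter.Eventually.of_forall fun x => sq_nonneg (f x)) (hf.pow_const 2).aestronglyMeasurable
    rw [hf1] at h1
    have h2 : ∫⁻ x, ENNReal.ofReal ((f x)^2) ∂π ≠ ∞ := hint2.lintegral_lt_top.ne
    rw [← ENNReal.ofReal_toReal h2, ← h1, ENNReal.ofReal_one]
  -- Dirichlet form of f over J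
  set Df' := ∫⁻ z : E × E, ENNReal.ofReal ((f z.1 - f z.2)^2) ∂J with hDf'
  have hfsqm : Measurable fun z : E × E => ENNReal.ofReal ((f z.1)^2) :=
    ENNReal.measurable_ofReal.comp ((hf.comp measurable_fst).pow_const 2)
  have hmargf : ∫⁻ z : E × E, ENNReal.ofReal ((f z.1)^2) ∂J ≤ M' := by
    rw [hJ, Measure.lintegral_compProd hfsqm]
    calc ∫⁻ x, ∫⁻ _, ENNReal.ofReal ((f x)^2) ∂(q x) ∂π
        = ∫⁻ x, ENNReal.ofReal ((f x)^2) * q x univ ∂π := by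
          refine lintegral_congr fun x => ?_
          rw [lintegral_const]
      _ ≤ ∫⁻ x, ENNReal.ofReal ((f x)^2) * M' ∂π :=
          lintegral_mono fun x => mul_le_mul_right (hbound x) _
      _ = M' := by
          rw [lintegral_mul_const' _ _ ENNReal.ofReal_ne_top, hIf, one_mul]
  have hmargf2 : ∫⁻ z : E × E, ENNReal.ofReal ((f z.2)^2) ∂J
      = ∫⁻ z : E × E, ENNReal.ofReal ((f z.1)^2) ∂J :=
    LS_lintegral_swap π q hsymm (fun z => ENNReal.ofReal ((f z.1)^2)) hfsqm
  have hDffin : Df' ≤ 4 * M' := by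
    have hpt : ∀ z : E × E, ENNReal.ofReal ((f z.1 - f z.2)^2)
        ≤ 2 * ENNReal.ofReal ((f z.1)^2) + 2 * ENNReal.ofReal ((f z.2)^2) := by
      intro z
      have h2e : (2:ℝ≥0∞) = ENNReal.ofReal (2:ℝ) := by rw [ENNReal.ofReal_ofNat]
      rw [h2e, ← ENNReal.ofReal_mul (by norm_num), ← ENNReal.ofReal_mul (by norm_num),
        ← ENNReal.ofReal_add (by positivity) (by positivity)]
      exact ENNReal.ofReal_le_ofReal (by nlinarith [sq_nonneg (f z.1 + f z.2)])
    calc Df' ≤ ∫⁻ z : E × E, (2 * ENNReal.ofReal ((f z.1)^2)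
          + 2 * ENNReal.ofReal ((f z.2)^2)) ∂J := lintegral_mono hpt
      _ = 2 * ∫⁻ z : E × E, ENNReal.ofReal ((f z.1)^2) ∂J
          + 2 * ∫⁻ z : E × E, ENNReal.ofReal ((f z.2)^2) ∂J := by
          rw [lintegral_add_left (hfsqm.const_mul 2),
            lintegral_const_mul' 2 _ (by norm_num), lintegral_const_mul' 2 _ (by norm_num)]
      _ ≤ 2 * M' + 2 * M' := by
          rw [hmargf2]
          exact add_le_add (mul_le_mul_right hmargf 2) (mul_le_mul_right hmargf 2)
      _ = 4 * M' := by ring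
  have hDfne : Df' ≠ ∞ :=
    (lt_of_le_of_lt hDffin (ENNReal.mul_lt_top (by norm_num) ENNReal.ofReal_lt_top)).ne
  -- representation of the Dirichlet integral
  have hu : Measurable (uncurry fun x y => ENNReal.ofReal ((f y - f x)^2)) := by
    apply ENNReal.measurable_ofReal.comp
    exact ((hf.comp measurable_snd).sub (hf.comp measurable_fst)).pow_const 2
  have hG : Measurable fun x => ∫⁻ y, ENNReal.ofReal ((f y - f x)^2) ∂(q x) :=
    hu.lintegral_kernel_prod_right
  have hiter : ∫⁻ x, ∫⁻ y, ENNReal.ofReal ((f y - f x)^2) ∂(q x) ∂π = Df' := by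
    rw [hDf', hJ, Measure.lintegral_compProd (f := fun z : E × E =>
      ENNReal.ofReal ((f z.1 - f z.2)^2))
      (ENNReal.measurable_ofReal.comp
        (((hf.comp measurable_fst).sub (hf.comp measurable_snd)).pow_const 2))]
    refine lintegral_congr fun x => lintegral_congr fun y => ?_
    congr 1
    ring
  have hfinae : ∀ᵐ x ∂π, (∫⁻ y, ENNReal.ofReal ((f y - f x)^2) ∂(q x)) ≠ ∞ := by
    have hne : ∫⁻ x, ∫⁻ y, ENNReal.ofReal ((f y - f x)^2) ∂(q x) ∂π ≠ ∞ := by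
      rw [hiter]; exact hDfne
    exact (ae_lt_top hG hne).mono fun x hx => hx.ne
  have hrrepr : ∫ x, (∫ y, (f y - f x)^2 ∂(q x)) ∂π = Df'.toReal := by
    rw [LS_repr π q f hf hfinae, hiter]
  -- median and positive/negative parts
  obtain ⟨m, hm1, hm2⟩ := LS_exists_median π f hf
  set g : E → ℝ := fun x => max (f x - m) 0 with hgdef
  set h : E → ℝ := fun x => max (m - f x) 0 with hhdef
  have hgm : Measurable g := (hf.sub_const m).max measurable_const
  have hhm : Measurable h := (measurable_const.sub hf).max measurable_const
  have hg0 : ∀ x, 0 ≤ g x := fun x => le_max_right _ _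
  have hh0 : ∀ x, 0 ≤ h x := fun x => le_max_right _ _
  have hsuppg : π {x | 0 < g x} ≤ 2⁻¹ := by
    have hset : {x | 0 < g x} = {x | f x ≤ m}ᶜ := by
      ext x
      simp only [hgdef, mem_setOf_eq, mem_compl_iff, lt_max_iff, lt_irrefl, or_false,
        sub_pos, not_le]
    rw [hset, measure_compl (measurableSet_le hf measurable_const) (measure_ne_top _ _),
      measure_univ]
    calc 1 - π {x | f x ≤ m} ≤ 1 - 2⁻¹ := tsub_le_tsub_left hm1 1
      _ = 2⁻¹ := LS_half
  have hsupph : π {x | 0 < h x} ≤ 2⁻¹ := by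
    have hset : {x | 0 < h x} = {x | m ≤ f x}ᶜ := by
      ext x
      simp only [hhdef, mem_setOf_eq, mem_compl_iff, lt_max_iff, lt_irrefl, or_false,
        sub_pos, not_le]
    rw [hset, measure_compl (measurableSet_le measurable_const hf) (measure_ne_top _ _),
      measure_univ]
    calc 1 - π {x | m ≤ f x} ≤ 1 - 2⁻¹ := tsub_le_tsub_left hm2 1
      _ = 2⁻¹ := LS_half
  -- squares
  have hgh : ∀ x, (g x)^2 + (h x)^2 = (f x - m)^2 := by
    intro x
    rcases le_total (f x) m with hc | hc
    · rw [hgdef, hhdef]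
      simp only
      rw [max_eq_right (sub_nonpos.mpr hc), max_eq_left (sub_nonneg.mpr hc)]
      ring
    · rw [hgdef, hhdef]
      simp only
      rw [max_eq_left (sub_nonneg.mpr hc), max_eq_right (sub_nonpos.mpr hc)]
      ring
  have hfm2 : Integrable (fun x => (f x - m)^2) π := by
    have he : (fun x => (f x - m)^2) = fun x => ((f x)^2 - (2*m)*(f x)) + m^2 :=
      funext fun x => by ring
    rw [he]
    exact (hint2.sub (hintf.const_mul (2*m))).add (integrable_const _)
  have hval : ∫ x, (f x - m)^2 ∂π = 1 + m^2 := by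
    have he : (fun x => (f x - m)^2) = fun x => ((f x)^2 - (2*m)*(f x)) + m^2 :=
      funext fun x => by ring
    have hi1 : Integrable (fun x => (f x)^2 - (2*m)*(f x)) π :=
      hint2.sub (hintf.const_mul (2*m))
    have hi2 : Integrable (fun x => (2*m)*(f x)) π := hintf.const_mul (2*m)
    rw [he, integral_add hi1 (integrable_const _),
      integral_sub hint2 hi2, integral_const_mul, hf0, hf1, integral_const]
    simp
  have hg2le : ∀ x, (g x)^2 ≤ (f x - m)^2 := fun x => by nlinarith [hgh x, sq_nonneg (h x)]
  have hh2le : ∀ x, (h x)^2 ≤ (f x - m)^2 := fun x => by nlinarith [hgh x, sq_nonneg (g x)]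
  have hg2int : Integrable (fun x => (g x)^2) π := by
    refine Integrable.mono' hfm2 (hgm.pow_const 2).aestronglyMeasurable
      (Filter.Eventually.of_forall fun x => ?_)
    rw [Real.norm_eq_abs, abs_of_nonneg (sq_nonneg _)]
    exact hg2le x
  have hh2int : Integrable (fun x => (h x)^2) π := by
    refine Integrable.mono' hfm2 (hhm.pow_const 2).aestronglyMeasurable
      (Filter.Eventually.of_forall fun x => ?_)
    rw [Real.norm_eq_abs, abs_of_nonneg (sq_nonneg _)]
    exact hh2le x
  set G' := ∫⁻ x, ENNReal.ofReal ((g x)^2) ∂π with hG'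
  set H' := ∫⁻ x, ENNReal.ofReal ((h x)^2) ∂π with hH'
  have hG'ne : G' ≠ ∞ := hg2int.lintegral_lt_top.ne
  have hH'ne : H' ≠ ∞ := hh2int.lintegral_lt_top.ne
  have hG'toReal : G'.toReal = ∫ x, (g x)^2 ∂π :=
    (integral_eq_lintegral_of_nonneg_ae (Filter.Eventually.of_forall fun x => sq_nonneg _)
      (hgm.pow_const 2).aestronglyMeasurable).symm
  have hH'toReal : H'.toReal = ∫ x, (h x)^2 ∂π :=
    (integral_eq_lintegral_of_nonneg_ae (Filter.Eventually.of_forall fun x => sq_nonneg _)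
      (hhm.pow_const 2).aestronglyMeasurable).symm
  have hsum : G'.toReal + H'.toReal = 1 + m^2 := by
    rw [hG'toReal, hH'toReal, ← integral_add hg2int hh2int, ← hval]
    exact integral_congr_ae (Filter.Eventually.of_forall fun x => hgh x)
  have hGH1 : 1 ≤ G'.toReal + H'.toReal := by nlinarith [sq_nonneg m]
  -- Dirichlet forms of g and h
  set Dg' := ∫⁻ z : E × E, ENNReal.ofReal ((g z.1 - g z.2)^2) ∂J with hDg'
  set Dh' := ∫⁻ z : E × E, ENNReal.ofReal ((h z.1 - h z.2)^2) ∂J with hDh'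
  have hgzm : Measurable fun z : E × E => ENNReal.ofReal ((g z.1 - g z.2)^2) :=
    ENNReal.measurable_ofReal.comp
      (((hgm.comp measurable_fst).sub (hgm.comp measurable_snd)).pow_const 2)
  have hDsum : Dg' + Dh' ≤ Df' := by
    have hpt : ∀ z : E × E, ENNReal.ofReal ((g z.1 - g z.2)^2)
        + ENNReal.ofReal ((h z.1 - h z.2)^2) ≤ ENNReal.ofReal ((f z.1 - f z.2)^2) := by
      intro z
      rw [← ENNReal.ofReal_add (sq_nonneg _) (sq_nonneg _)]
      exact ENNReal.ofReal_le_ofReal (LS_contraction (f z.1) (f z.2) m)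
    calc Dg' + Dh' = ∫⁻ z : E × E, (ENNReal.ofReal ((g z.1 - g z.2)^2)
          + ENNReal.ofReal ((h z.1 - h z.2)^2)) ∂J := (lintegral_add_left hgzm _).symm
      _ ≤ Df' := lintegral_mono hpt
  -- main inequality in ℝ≥0∞
  have hmain : k'^2 ≤ M' * Df' := by
    rcases eq_or_ne G' 0 with hGe | hGne
    · -- use h
      have hHR : 1 ≤ H'.toReal := by
        have : G'.toReal = 0 := by rw [hGe]; simp
        linarith [hGH1]
      have hH1 : (1:ℝ≥0∞) ≤ H' := by
        rw [← ENNReal.ofReal_one, ← ENNReal.ofReal_toReal hH'ne]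
        exact ENNReal.ofReal_le_ofReal hHR
      have hH0 : H' ≠ 0 := fun hc => by rw [hc] at hH1; simp at hH1
      have hkey := LS_key π q M hM hbound hsymm k hK h hhm hh0 hsupph H' hH' hH0 hH'ne
      have hDh : Dh' ≤ Df' * H' := by
        refine le_trans (le_trans le_add_self hDsum) ?_
        exact le_mul_of_one_le_right' hH1
      have : k'^2 * H' ≤ (M' * Df') * H' := by
        calc k'^2 * H' ≤ M' * Dh' := hkey
          _ ≤ M' * (Df' * H') := mul_le_mul_right hDh M'
          _ = (M' * Df') * H' := by ring
      exact (ENNReal.mul_le_mul_iff_left hH0 hH'ne).mp this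
    · rcases eq_or_ne H' 0 with hHe | hHne
      · have hGR : 1 ≤ G'.toReal := by
          have : H'.toReal = 0 := by rw [hHe]; simp
          linarith [hGH1]
        have hG1 : (1:ℝ≥0∞) ≤ G' := by
          rw [← ENNReal.ofReal_one, ← ENNReal.ofReal_toReal hG'ne]
          exact ENNReal.ofReal_le_ofReal hGR
        have hkey := LS_key π q M hM hbound hsymm k hK g hgm hg0 hsuppg G' hG' hGne hG'ne
        have hDg : Dg' ≤ Df' * G' := by
          refine le_trans (le_trans le_self_add hDsum) ?_
          exact le_mul_of_one_le_right' hG1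
        have : k'^2 * G' ≤ (M' * Df') * G' := by
          calc k'^2 * G' ≤ M' * Dg' := hkey
            _ ≤ M' * (Df' * G') := mul_le_mul_right hDg M'
            _ = (M' * Df') * G' := by ring
        exact (ENNReal.mul_le_mul_iff_left hGne hG'ne).mp this
      · -- both positive
        have hGH1' : (1:ℝ≥0∞) ≤ G' + H' := by
          rw [← ENNReal.ofReal_one, ← ENNReal.ofReal_toReal hG'ne, ← ENNReal.ofReal_toReal hH'ne,
            ← ENNReal.ofReal_add ENNReal.toReal_nonneg ENNReal.toReal_nonneg]
          exact ENNReal.ofReal_le_ofReal hGH1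
        rcases le_total (Dg' * H') (Dh' * G') with hc | hc
        · have hDg : Dg' ≤ Df' * G' := by
            refine le_trans (le_mul_of_one_le_right' hGH1') ?_
            calc Dg' * (G' + H') = Dg' * G' + Dg' * H' := mul_add _ _ _
              _ ≤ Dg' * G' + Dh' * G' := add_le_add le_rfl hc
              _ = (Dg' + Dh') * G' := (add_mul _ _ _).symm
              _ ≤ Df' * G' := mul_le_mul_left hDsum G'
          have hkey := LS_key π q M hM hbound hsymm k hK g hgm hg0 hsuppg G' hG' hGne hG'ne
          have : k'^2 * G' ≤ (M' * Df') * G' := by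
            calc k'^2 * G' ≤ M' * Dg' := hkey
              _ ≤ M' * (Df' * G') := mul_le_mul_right hDg M'
              _ = (M' * Df') * G' := by ring
          exact (ENNReal.mul_le_mul_iff_left hGne hG'ne).mp this
        · have hDh : Dh' ≤ Df' * H' := by
            refine le_trans (le_mul_of_one_le_right' hGH1') ?_
            calc Dh' * (G' + H') = Dh' * G' + Dh' * H' := mul_add _ _ _
              _ ≤ Dg' * H' + Dh' * H' := add_le_add hc le_rfl
              _ = (Dg' + Dh') * H' := (add_mul _ _ _).symm
              _ ≤ Df' * H' := mul_le_mul_left hDsum H'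
          have hH0 : H' ≠ 0 := hHne
          have hkey := LS_key π q M hM hbound hsymm k hK h hhm hh0 hsupph H' hH' hH0 hH'ne
          have : k'^2 * H' ≤ (M' * Df') * H' := by
            calc k'^2 * H' ≤ M' * Dh' := hkey
              _ ≤ M' * (Df' * H') := mul_le_mul_right hDh M'
              _ = (M' * Df') * H' := by ring
          exact (ENNReal.mul_le_mul_iff_left hH0 hH'ne).mp this
  -- back to the reals
  have hofk : ENNReal.ofReal (k^2) ≤ M' * Df' := by
    rw [ENNReal.ofReal_pow hk0]
    exact hmain
  have hMDne : M' * Df' ≠ ∞ := ENNReal.mul_ne_top ENNReal.ofReal_ne_top hDfne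
  have hreal : k^2 ≤ M * Df'.toReal := by
    have h1 := (ENNReal.ofReal_le_iff_le_toReal hMDne).mp hofk
    rwa [ENNReal.toReal_mul, ENNReal.toReal_ofReal hM.le] at h1
  rw [hrrepr, div_le_iff₀ (by positivity)]
  nlinarith [ENNReal.toReal_nonneg (a := Df')]

lemma LS_testfun (π : Measure E) [IsProbabilityMeasure π] (A : Set E) (hA : MeasurableSet A)
    (h0 : 0 < π A) (h1 : π A < 1) :
    ∃ f : E → ℝ, Measurable f ∧ (∫ x, f x ∂π) = 0 ∧ (∫ x, (f x)^2 ∂π) = 1 := by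
  classical
  set a := (π Aᶜ).toReal with ha'
  set b := (π A).toReal with hb'
  have hcompl : π Aᶜ = 1 - π A := by
    rw [measure_compl hA (measure_ne_top _ _), measure_univ]
  have hac0 : 0 < π Aᶜ := by
    rw [hcompl]
    exact tsub_pos_of_lt h1
  have ha : 0 < a := ENNReal.toReal_pos hac0.ne' (measure_ne_top _ _)
  have hb : 0 < b := ENNReal.toReal_pos h0.ne' (measure_ne_top _ _)
  have hab : b + a = 1 := by
    rw [ha', hb', ← ENNReal.toReal_add (measure_ne_top _ _) (measure_ne_top _ _),
      prob_add_prob_compl hA]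
    simp
  set s0 := Real.sqrt (a*b) with hs0'
  have hs0 : 0 < s0 := Real.sqrt_pos.mpr (by positivity)
  have hs0sq : s0^2 = a*b := Real.sq_sqrt (by positivity)
  refine ⟨fun x => if x ∈ A then a/s0 else -(b/s0), Measurable.ite hA measurable_const
    measurable_const, ?_, ?_⟩
  · have he : (fun x => if x ∈ A then a/s0 else -(b/s0))
        = fun x => A.indicator (fun _ => a/s0 + b/s0) x + (-(b/s0)) := by
      funext x
      by_cases hx : x ∈ A
      · simp only [if_pos hx, indicator_of_mem hx]
        ring
      · simp only [if_neg hx, indicator_of_notMem hx]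
        ring
    rw [he, integral_add ((integrable_const _).indicator hA) (integrable_const _),
      integral_indicator_const _ hA, integral_const]
    simp only [smul_eq_mul, measureReal_def, measure_univ, ENNReal.toReal_one, one_smul, ← hb']
    field_simp
    nlinarith
  · have he : (fun x => (if x ∈ A then a/s0 else -(b/s0))^2)
        = fun x => A.indicator (fun _ => (a/s0)^2 - (b/s0)^2) x + (b/s0)^2 := by
      funext x
      by_cases hx : x ∈ A
      · simp only [if_pos hx, indicator_of_mem hx]
        ring
      · simp only [if_neg hx, indicator_of_notMem hx]
        ring
    rw [he, integral_add ((integrable_const _).indicator hA) (integrable_const _),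
      integral_indicator_const _ hA, integral_const]
    simp only [smul_eq_mul, measureReal_def, measure_univ, ENNReal.toReal_one, one_mul, ← hb']
    have hs0ne : s0 ≠ 0 := hs0.ne'
    field_simp
    nlinarith

end LawlerSokal

/-- Lawler–Sokal Cheeger bound for bounded jump processes: λ₁ ≥ k²/(2M). -/
theorem stmt7 {E : Type*} [MeasurableSpace E] (π : Measure E) [IsProbabilityMeasure π]
    (q : Kernel E E) (M : ℝ) (hM : 0 < M)
    (hbound : ∀ x, q x Set.univ ≤ ENNReal.ofReal M)
    (hsymm : ∀ A B : Set E, MeasurableSet A → MeasurableSet B →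
      ∫⁻ x in A, q x B ∂π = ∫⁻ x in B, q x A ∂π)
    (k lam1 : ℝ)
    (hk : k = sInf {r : ℝ | ∃ A : Set E, MeasurableSet A ∧ 0 < π A ∧ π A < 1 ∧
      r = (∫ x in A, (q x Aᶜ).toReal ∂π) / min (π A).toReal (π Aᶜ).toReal})
    (hlam : lam1 = sInf {r : ℝ | ∃ f : E → ℝ, Measurable f ∧
      (∫ x, f x ∂π) = 0 ∧ (∫ x, (f x)^2 ∂π) = 1 ∧
      r = (1/2) * ∫ x, (∫ y, (f y - f x)^2 ∂(q x)) ∂π}) :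
    k^2 / (2*M) ≤ lam1 := by
  haveI : IsFiniteKernel q := ⟨⟨ENNReal.ofReal M, ENNReal.ofReal_lt_top, hbound⟩⟩
  set T := {r : ℝ | ∃ A : Set E, MeasurableSet A ∧ 0 < π A ∧ π A < 1 ∧
      r = (∫ x in A, (q x Aᶜ).toReal ∂π) / min (π A).toReal (π Aᶜ).toReal} with hT
  set S := {r : ℝ | ∃ f : E → ℝ, Measurable f ∧
      (∫ x, f x ∂π) = 0 ∧ (∫ x, (f x)^2 ∂π) = 1 ∧
      r = (1/2) * ∫ x, (∫ y, (f y - f x)^2 ∂(q x)) ∂π} with hS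
  have hTnonneg : ∀ r ∈ T, (0:ℝ) ≤ r := by
    rintro r ⟨A, hA, h0, h1, rfl⟩
    apply div_nonneg
    · exact integral_nonneg fun x => ENNReal.toReal_nonneg
    · exact le_min ENNReal.toReal_nonneg ENNReal.toReal_nonneg
  have hTbdd : BddBelow T := ⟨0, fun r hr => hTnonneg r hr⟩
  have hk0 : 0 ≤ k := by
    rcases T.eq_empty_or_nonempty with hTe | hTne
    · rw [hk, hT] at *
      rw [hTe, Real.sInf_empty]
    · rw [hk]
      exact le_csInf hTne hTnonneg
  have hK : ∀ A : Set E, MeasurableSet A → 0 < π A → π A ≤ 2⁻¹ →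
      ENNReal.ofReal k * π A ≤ ∫⁻ x in A, q x Aᶜ ∂π := by
    intro A hA h0 hhalf
    set L := ∫⁻ x in A, q x Aᶜ ∂π with hL
    have hLle : L ≤ ENNReal.ofReal M := by
      calc L ≤ ∫⁻ _ in A, ENNReal.ofReal M ∂π :=
            lintegral_mono fun x => le_trans (measure_mono (subset_univ _)) (hbound x)
        _ = ENNReal.ofReal M * π A := setLIntegral_const A _
        _ ≤ ENNReal.ofReal M * 1 := mul_le_mul_right prob_le_one _
        _ = ENNReal.ofReal M := mul_one _
    have hLfin : L ≠ ∞ := (lt_of_le_of_lt hLle ENNReal.ofReal_lt_top).ne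
    have hqm : Measurable fun x => q x Aᶜ := Kernel.measurable_coe q hA.compl
    have hnum : ∫ x in A, (q x Aᶜ).toReal ∂π = L.toReal := by
      rw [hL, integral_eq_lintegral_of_nonneg_ae
        (Filter.Eventually.of_forall fun x => ENNReal.toReal_nonneg)
        (ENNReal.measurable_toReal.comp hqm).aestronglyMeasurable]
      congr 1
      refine lintegral_congr fun x => ?_
      rw [ENNReal.ofReal_toReal]
      exact (lt_of_le_of_lt (le_trans (measure_mono (subset_univ _)) (hbound x))
        ENNReal.ofReal_lt_top).ne
    have hcompl : π Aᶜ = 1 - π A := by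
      rw [measure_compl hA (measure_ne_top _ _), measure_univ]
    have hle2 : π A ≤ π Aᶜ := by
      rw [hcompl]
      calc π A ≤ 2⁻¹ := hhalf
        _ = 1 - 2⁻¹ := LS_half.symm
        _ ≤ 1 - π A := tsub_le_tsub_left hhalf 1
    have hmin : min (π A).toReal (π Aᶜ).toReal = (π A).toReal :=
      min_eq_left (ENNReal.toReal_mono (measure_ne_top _ _) hle2)
    have hA1 : π A < 1 := lt_of_le_of_lt hhalf (by norm_num)
    have hmem : L.toReal / (π A).toReal ∈ T := ⟨A, hA, h0, hA1, by rw [hnum, hmin]⟩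
    have hkle : k ≤ L.toReal / (π A).toReal := by
      rw [hk]
      exact csInf_le hTbdd hmem
    have hden : 0 < (π A).toReal := ENNReal.toReal_pos h0.ne' (measure_ne_top _ _)
    have hmul : k * (π A).toReal ≤ L.toReal := (le_div_iff₀ hden).mp hkle
    calc ENNReal.ofReal k * π A = ENNReal.ofReal (k * (π A).toReal) := by
          rw [ENNReal.ofReal_mul hk0, ENNReal.ofReal_toReal (measure_ne_top _ _)]
      _ ≤ ENNReal.ofReal L.toReal := ENNReal.ofReal_le_ofReal hmul
      _ = L := ENNReal.ofReal_toReal hLfin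
  rw [hlam]
  rcases S.eq_empty_or_nonempty with hSe | hSne
  · have hTe : T = ∅ := by
      by_contra hTne
      obtain ⟨r0, A, hA, h0, h1, _⟩ := Set.nonempty_iff_ne_empty.mpr hTne
      obtain ⟨f, hfm, hf0, hf1⟩ := LS_testfun π A hA h0 h1
      have : ((1:ℝ)/2) * ∫ x, (∫ y, (f y - f x)^2 ∂(q x)) ∂π ∈ S :=
        ⟨f, hfm, hf0, hf1, rfl⟩
      rw [hSe] at this
      exact this
    have hkz : k = 0 := by rw [hk, hTe, Real.sInf_empty]
    rw [hSe, Real.sInf_empty, hkz]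
    norm_num
  · refine le_csInf hSne ?_
    rintro r ⟨f, hfm, hf0, hf1, rfl⟩
    exact LS_core π q M hM hbound hsymm k hk0 hK f hfm hf0 hf1
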